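/- Teleportation identity: for every ψ ∈ ℂ², (B† ⊗ I₂)(ψ ⊗ EPR) = (1/2)·∑_{m₁,m₂ ∈ {0,1}} |m₁⟩ ⊗ |m₂⟩ ⊗ (X^{m₂} Z^{m₁} ψ), where X = [[0,1],[1,0]] and Z = [[1,0],[0,−1]]. -/
import Mathlib


open Matrix Kronecker

noncomputable def Hgate : Matrix (Fin 2) (Fin 2) ℂ :=
  ((1 / Real.sqrt 2 : ℝ) : ℂ) • !![1, 1; 1, -1]

def Xgate : Matrix (Fin 2) (Fin 2) ℂ := !![0, 1; 1, 0]

def Zgate : Matrix (Fin 2) (Fin 2) ℂ := !![1, 0; 0, -1]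

/-- The CNOT gate: `CNOT(|a⟩⊗|b⟩) = |a⟩⊗|a⊕b⟩`. -/
def CNOT : Matrix (Fin 2 × Fin 2) (Fin 2 × Fin 2) ℂ :=
  fun p q => if p = (q.1, q.1 + q.2) then 1 else 0

/-- The Bell gate `B = CNOT * (H ⊗ I₂)`. -/
noncomputable def Bgate : Matrix (Fin 2 × Fin 2) (Fin 2 × Fin 2) ℂ :=
  CNOT * (Hgate ⊗ₖ (1 : Matrix (Fin 2) (Fin 2) ℂ))

/-- `B†`, the conjugate transpose of the Bell gate. -/
noncomputable def Bdag : Matrix (Fin 2 × Fin 2) (Fin 2 × Fin 2) ℂ := Bgateᴴ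

/-- The computational basis state `|a⟩` of one qubit. -/
def ket (a : Fin 2) : Fin 2 → ℂ := fun i => if i = a then 1 else 0

/-- The EPR state `B(|0⟩⊗|0⟩) = (|00⟩+|11⟩)/√2`. -/
noncomputable def EPR : Fin 2 × Fin 2 → ℂ :=
  Bgate.mulVec fun p => ket 0 p.1 * ket 0 p.2

lemma Bgate_apply (p q : Fin 2 × Fin 2) :
    Bgate p q = Hgate p.1 q.1 * (if p.1 + p.2 = q.2 then 1 else 0) := by
  obtain ⟨a, b⟩ := p; obtain ⟨x, y⟩ := q
  simp only [Bgate, Matrix.mul_apply, CNOT, Fintype.sum_prod_type, Fin.sum_univ_two,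
    Matrix.kroneckerMap_apply, Matrix.one_apply]
  fin_cases a <;> fin_cases b <;> fin_cases x <;> fin_cases y <;>
    norm_num [Prod.ext_iff] <;>
      first
      | rfl
      | (intro h; exact absurd (by decide) h)

lemma EPR_apply (p : Fin 2 × Fin 2) :
    EPR p = Hgate p.1 0 * (if p.1 + p.2 = 0 then 1 else 0) := by
  obtain ⟨a, b⟩ := p
  simp only [EPR, Matrix.mulVec, dotProduct, Fintype.sum_prod_type, Fin.sum_univ_two,
    ket, Bgate_apply]
  norm_num

set_option maxHeartbeats 2000000 in
/-- Teleportation identity: for every `ψ ∈ ℂ²`,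
`(B† ⊗ I₂)(ψ ⊗ EPR) = (1/2)·∑_{m₁,m₂} |m₁⟩ ⊗ |m₂⟩ ⊗ (X^{m₂} Z^{m₁} ψ)`.
Qubits are grouped as `((q, r₁), r₂)` so that `B†` acts on the first two. -/
theorem teleportation_identity (ψ : Fin 2 → ℂ) :
    (Bdag ⊗ₖ (1 : Matrix (Fin 2) (Fin 2) ℂ)).mulVec
        (fun p : (Fin 2 × Fin 2) × Fin 2 => ψ p.1.1 * EPR (p.1.2, p.2))
      = (1 / 2 : ℂ) • ∑ m₁ : Fin 2, ∑ m₂ : Fin 2,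
          (fun p : (Fin 2 × Fin 2) × Fin 2 =>
            ket m₁ p.1.1 * ket m₂ p.1.2 *
              ((Xgate ^ (m₂ : ℕ) * Zgate ^ (m₁ : ℕ)).mulVec ψ) p.2) := by
  have hsr : Real.sqrt 2 * Real.sqrt 2 = 2 := Real.mul_self_sqrt (by norm_num)
  have hs : ((Real.sqrt 2 : ℝ) : ℂ) * ((Real.sqrt 2 : ℝ) : ℂ) = 2 := by exact_mod_cast hsr
  have hs0 : ((Real.sqrt 2 : ℝ) : ℂ) ≠ 0 := by
    intro h; rw [h, mul_zero] at hs; norm_num at hs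
  funext p
  obtain ⟨⟨a, b⟩, c⟩ := p
  simp only [Matrix.mulVec, dotProduct, Fintype.sum_prod_type, Fin.sum_univ_two,
    Matrix.kroneckerMap_apply, Matrix.one_apply, Bdag, Matrix.conjTranspose_apply,
    Bgate_apply, EPR_apply, Pi.smul_apply, Finset.sum_apply, smul_eq_mul,
    Fin.val_zero, Fin.val_one, pow_zero, pow_one, Matrix.one_mul, Matrix.mul_one,
    Fin.isValue]
  fin_cases a <;> fin_cases b <;> fin_cases c
  all_goals simp only [Fin.isValue, Fin.reduceAdd, Fin.reduceEq, if_true, if_false, reduceIte,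
    mul_one, mul_zero, one_mul, zero_mul, add_zero, zero_add]
  all_goals norm_num [show (2:Fin 2) = 0 from rfl, apply_ite (starRingEnd ℂ), ket, Hgate, Xgate, Zgate, Matrix.mul_apply, Fin.sum_univ_two,
        Complex.star_def, _root_.map_mul, Complex.conj_ofReal, Matrix.smul_apply, smul_eq_mul]
  all_goals field_simp
  all_goals try norm_num
  all_goals
    first
    | linear_combination ψ 0 * hs
    | linear_combination ψ 1 * hs
    | linear_combination (-ψ 0) * hs
    | linear_combination (-ψ 1) * hs
    | exact Or.inl (by rw [sq]; exact hs.symm)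
    | exact Or.inl hs.symm
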